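/- For every compact subset K of the Sorgenfrey line ℝₗ there exists a countable set Q ⊆ ℚ of rational numbers such that K ∪ Q is compact in ℝₗ and Q is dense in K ∪ Q (in the subspace topology). Consequently every compact subset of ℝₗ is contained in a compact subset that is separable with a dense set of rational points. -/

import Mathlib

open Set Topology

def SorgenfreyLine : Type := ℝ

notation "ℝₗ" => SorgenfreyLine

noncomputable instance : Field ℝₗ := inferInstanceAs (Field ℝ)

noncomputable instance : LinearOrder ℝₗ := inferInstanceAs (LinearOrder ℝ)

instance : IsStrictOrderedRing ℝₗ := inferInstanceAs (IsStrictOrderedRing ℝ)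

instance : TopologicalSpace ℝₗ :=
  TopologicalSpace.generateFrom {s : Set ℝₗ | ∃ a b : ℝₗ, a < b ∧ s = Set.Ico a b}

/-- The spread of a topological space: the supremum of cardinalities of discrete subspaces. -/
noncomputable def spread (X : Type*) [TopologicalSpace X] : Cardinal :=
  sSup {c : Cardinal | ∃ D : Set X, DiscreteTopology D ∧ Cardinal.mk D = c}

def Cometrizable (Y : Type*) [t : TopologicalSpace Y] : Prop :=
  ∃ τ : TopologicalSpace Y, t ≤ τ ∧ @TopologicalSpace.MetrizableSpace Y τ ∧
    ∀ y : Y, ∀ U ∈ nhds y, ∃ V ∈ nhds y, V ⊆ U ∧ IsClosed[τ] V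

def IsKDense {X : Type*} [TopologicalSpace X] (D : Set X) : Prop :=
  ∀ K : Set X, IsCompact K → ∃ K' : Set X, IsCompact K' ∧ K ⊆ K' ∧ K' ⊆ closure (D ∩ K')

def KSeparable (X : Type*) [TopologicalSpace X] : Prop :=
  ∃ D : Set X, D.Countable ∧ IsKDense D

open Filter

instance : Archimedean ℝₗ := inferInstanceAs (Archimedean ℝ)

/-- The identity map from the Sorgenfrey line to the reals. -/
def toR : ℝₗ → ℝ := fun x => x

/-- The identity map from the reals to the Sorgenfrey line. -/
def ofR : ℝ → ℝₗ := fun x => x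

theorem SL.isBasis : TopologicalSpace.IsTopologicalBasis
    {s : Set ℝₗ | ∃ a b : ℝₗ, a < b ∧ s = Set.Ico a b} := by
  refine ⟨?_, ?_, rfl⟩
  · rintro t1 ⟨a, b, hab, rfl⟩ t2 ⟨c, d, hcd, rfl⟩ x hx
    refine ⟨Ico (max a c) (min b d), ⟨max a c, min b d, ?_, rfl⟩, ?_, ?_⟩
    · exact lt_of_le_of_lt (max_le hx.1.1 hx.2.1) (lt_min hx.1.2 hx.2.2)
    · exact ⟨max_le hx.1.1 hx.2.1, lt_min hx.1.2 hx.2.2⟩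
    · rw [Ico_inter_Ico]
  · refine sUnion_eq_univ_iff.2 fun x => ⟨Ico x (x+1), ⟨x, x+1, by linarith, rfl⟩, ?_⟩
    exact ⟨le_rfl, by linarith⟩

theorem SL.nhds_basis_Ico (a : ℝₗ) : (nhds a).HasBasis (a < ·) (Set.Ico a ·) := by
  constructor
  intro t
  rw [SL.isBasis.mem_nhds_iff]
  constructor
  · rintro ⟨s, ⟨c, d, hcd, rfl⟩, hx, hst⟩
    exact ⟨d, hx.2, fun z hz => hst ⟨le_trans hx.1 hz.1, hz.2⟩⟩
  · rintro ⟨b, hab, h⟩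
    exact ⟨Ico a b, ⟨a, b, hab, rfl⟩, ⟨le_rfl, hab⟩, h⟩

theorem SL.isOpen_Ici (a : ℝₗ) : IsOpen (Ici a) := by
  rw [isOpen_iff_mem_nhds]
  intro x hx
  refine Filter.mem_of_superset ((SL.nhds_basis_Ico x).mem_of_mem (by exact lt_add_one x)) ?_
  exact fun z hz => le_trans hx hz.1

theorem SL.continuous_toR : Continuous toR := by
  rw [continuous_iff_continuousAt]
  intro x
  rw [ContinuousAt, (SL.nhds_basis_Ico x).tendsto_iff (Metric.nhds_basis_ball)]
  intro ε hε
  refine ⟨x + ofR ε, by exact lt_add_of_pos_right x hε, fun z hz => ?_⟩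
  have h1 : toR x ≤ toR z := hz.1
  have h2 : toR z < toR x + ε := hz.2
  simp only [Metric.mem_ball, Real.dist_eq, abs_lt]
  constructor <;> linarith

theorem SL.mem_closure (Q : Set ℝₗ) (x : ℝₗ) :
    x ∈ closure Q ↔ ∀ ε : ℝ, 0 < ε → ∃ v ∈ Q, x ≤ v ∧ toR v < toR x + ε := by
  rw [mem_closure_iff_nhds_basis (SL.nhds_basis_Ico x)]
  constructor
  · intro h ε hε
    obtain ⟨v, hvQ, hv⟩ := h (x + ofR ε) (lt_add_of_pos_right x hε)
    exact ⟨v, hvQ, hv.1, hv.2⟩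
  · intro h b hb
    obtain ⟨v, hvQ, h1, h2⟩ := h (toR b - toR x) (by exact sub_pos.2 hb)
    exact ⟨v, hvQ, h1, show toR v < toR b by linarith⟩

/-- A Sorgenfrey-compact set has no left accumulation point anywhere. -/
theorem SL.leftSep {K : Set ℝₗ} (hK : IsCompact K) (y : ℝ) :
    ∃ ε : ℝ, 0 < ε ∧ ∀ z ∈ K, ¬ (y - ε < toR z ∧ toR z < y) := by
  by_contra hcon
  push_neg at hcon
  set F : Filter ℝₗ := comap toR (nhdsWithin y (Iio y)) ⊓ Filter.principal K with hF
  have hne : F.NeBot := by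
    rw [hF, Filter.inf_principal_neBot_iff]
    intro U hU
    obtain ⟨s, hs, hsub⟩ := Filter.mem_comap.1 hU
    obtain ⟨ε', hε', hIoo⟩ := (nhdsLT_basis y).mem_iff.1 hs
    obtain ⟨z, hzK, hz⟩ := hcon (y - ε') (by linarith [sub_pos.2 hε'])
    refine ⟨z, hsub ?_, hzK⟩
    exact mem_preimage.2 (hIoo ⟨by linarith [hz.1], hz.2⟩)
  obtain ⟨x, hxK, hx⟩ := hK (f := F) inf_le_right
  -- first, toR x = y
  have hmap : (nhds (toR x) ⊓ nhdsWithin y (Iio y)).NeBot := by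
    have hb : (Filter.map toR (nhds x ⊓ F)).NeBot := (hx.neBot).map toR
    refine hb.mono (le_trans Filter.map_inf_le (inf_le_inf ?_ ?_))
    · exact SL.continuous_toR.continuousAt
    · exact le_trans (Filter.map_mono inf_le_left) (Filter.map_comap_le)
  have hxy : toR x = y := eq_of_nhds_neBot (hmap.mono (inf_le_inf le_rfl nhdsWithin_le_nhds))
  -- contradiction with Ici x being a neighborhood
  have h1 : Ici x ∈ nhds x := (SL.isOpen_Ici x).mem_nhds self_mem_Ici
  have h2 : toR ⁻¹' (Iio y) ∈ F :=
    Filter.mem_of_superset (inf_le_left (a := comap toR (nhdsWithin y (Iio y)))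
      (b := Filter.principal K) (Filter.preimage_mem_comap self_mem_nhdsWithin)) le_rfl
  have h3 : Ici x ∩ toR ⁻¹' (Iio y) = ∅ := by
    ext z
    simp only [mem_inter_iff, mem_Ici, mem_preimage, mem_Iio, mem_empty_iff_false, iff_false,
      not_and]
    intro hz
    have : toR x ≤ toR z := hz
    rw [hxy] at this
    exact not_lt.2 this
  have : (∅ : Set ℝₗ) ∈ nhds x ⊓ F := by
    rw [← h3]; exact Filter.inter_mem_inf h1 h2
  exact hx.ne (Filter.empty_mem_iff_bot.1 this)

/-- Main real-analysis construction. -/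
theorem SLmain (K' : Set ℝ) (hcomp : IsCompact K')
    (hsep : ∀ y : ℝ, ∃ ε : ℝ, 0 < ε ∧ ∀ z ∈ K', ¬ (y - ε < z ∧ z < y)) :
    ∃ Q' : Set ℝ, Q' ⊆ Set.range ((↑) : ℚ → ℝ) ∧
      IsCompact (K' ∪ Q') ∧
      (∀ y : ℝ, ∃ δ : ℝ, 0 < δ ∧ ∀ v ∈ K' ∪ Q', ¬ (y - δ < v ∧ v < y)) ∧
      (∀ x ∈ K', ∀ ε : ℝ, 0 < ε → ∃ v ∈ Q', x ≤ v ∧ v < x + ε) := by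
  classical
  have hcl : IsClosed K' := hcomp.isClosed
  obtain ⟨A, hA⟩ : BddBelow K' := hcomp.isBounded.bddBelow
  obtain ⟨B, hB⟩ : BddAbove K' := hcomp.isBounded.bddAbove
  choose eps heps hepsK using hsep
  -- the set of right-isolated points of K'
  set K2 : Set ℝ := {x | x ∈ K' ∧ ∃ r : ℝ, 0 < r ∧ ∀ z ∈ K', ¬ (x < z ∧ z < x + r)} with hK2
  have hK2sub : K2 ⊆ K' := fun x hx => hx.1
  have hrex : ∀ x, x ∈ K2 → ∃ r : ℝ, 0 < r ∧ ∀ z ∈ K', ¬ (x < z ∧ z < x + r) := fun x hx => hx.2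
  choose! r hr0 hrgap using hrex
  -- the rational points
  have hqex : ∀ x, x ∈ K2 → ∀ n : ℕ, ∃ q : ℚ,
      x < (q : ℝ) ∧ (q : ℝ) < x + min (r x / 2) (1 / (n + 1)) := by
    intro x hx n
    apply exists_rat_btwn
    have h1 : (0:ℝ) < r x / 2 := by linarith [hr0 x hx]
    have h2 : (0:ℝ) < 1 / (n + 1 : ℝ) := by positivity
    have := lt_min h1 h2
    linarith
  choose! qf hq1 hq2 using hqex
  set Q' : Set ℝ := {v | ∃ x ∈ K2, ∃ n : ℕ, v = (qf x n : ℝ)} with hQ'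
  -- the separation between right-isolated points with large gaps
  have hgap2 : ∀ x1 ∈ K2, ∀ x2 ∈ K2, x1 < x2 → x1 + r x1 ≤ x2 := by
    intro x1 h1 x2 h2 hlt
    by_contra hcon
    exact hrgap x1 h1 x2 (hK2sub h2) ⟨hlt, not_le.1 hcon⟩
  -- finiteness of points with large gaps
  have hfinB : ∀ c : ℝ, 0 < c → {x | x ∈ K2 ∧ 2 * c < r x}.Finite := by
    intro c hc
    have h2c : (0:ℝ) < 2 * c := by linarith
    apply Set.Finite.of_finite_image (f := fun x => ⌊x / (2 * c)⌋)
    · apply Set.Finite.subset (Set.finite_Icc ⌊A / (2*c)⌋ ⌊B / (2*c)⌋)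
      rintro i ⟨x, hx, rfl⟩
      have hxK : x ∈ K' := hK2sub hx.1
      constructor
      · exact Int.floor_mono (by exact div_le_div_of_nonneg_right (hA hxK) h2c.le)
      · exact Int.floor_mono (by exact div_le_div_of_nonneg_right (hB hxK) h2c.le)
    · intro x1 h1 x2 h2 hfeq
      by_contra hne
      rcases lt_or_gt_of_ne hne with hlt | hlt
      · have hle : x1 + r x1 ≤ x2 := hgap2 x1 h1.1 x2 h2.1 hlt
        have : x1 + 2*c < x2 := by linarith [h1.2]
        have hdiv : x1 / (2*c) + 1 ≤ x2 / (2*c) := by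
          rw [div_add' _ _ _ (ne_of_gt h2c)]
          exact div_le_div_of_nonneg_right (by linarith) h2c.le
        have : ⌊x1 / (2*c)⌋ + 1 ≤ ⌊x2 / (2*c)⌋ := by
          calc ⌊x1 / (2*c)⌋ + 1 = ⌊x1 / (2*c) + 1⌋ := (Int.floor_add_one _).symm
          _ ≤ ⌊x2 / (2*c)⌋ := Int.floor_mono hdiv
        have hfeq' : ⌊x1 / (2*c)⌋ = ⌊x2 / (2*c)⌋ := hfeq
        omega
      · have hle : x2 + r x2 ≤ x1 := hgap2 x2 h2.1 x1 h1.1 hlt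
        have : x2 + 2*c < x1 := by linarith [h2.2]
        have hdiv : x2 / (2*c) + 1 ≤ x1 / (2*c) := by
          rw [div_add' _ _ _ (ne_of_gt h2c)]
          exact div_le_div_of_nonneg_right (by linarith) h2c.le
        have : ⌊x2 / (2*c)⌋ + 1 ≤ ⌊x1 / (2*c)⌋ := by
          calc ⌊x2 / (2*c)⌋ + 1 = ⌊x2 / (2*c) + 1⌋ := (Int.floor_add_one _).symm
          _ ≤ ⌊x1 / (2*c)⌋ := Int.floor_mono hdiv
        have hfeq' : ⌊x1 / (2*c)⌋ = ⌊x2 / (2*c)⌋ := hfeq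
        omega
  -- finiteness of Q'-points with a given gap to their base point
  have hQcfin : ∀ c : ℝ, 0 < c →
      {v : ℝ | ∃ x ∈ K2, ∃ n : ℕ, v = (qf x n : ℝ) ∧ c ≤ (qf x n : ℝ) - x}.Finite := by
    intro c hc
    set N : ℕ := ⌈1/c⌉₊ + 1 with hN
    apply Set.Finite.subset (Set.Finite.image (fun p : ℝ × ℕ => (qf p.1 p.2 : ℝ))
      (Set.Finite.prod (hfinB c hc) (Set.finite_Iio N)))
    rintro v ⟨x, hx, n, rfl, hgapc⟩
    have hq2' := hq2 x hx n
    have hmin1 : x + min (r x / 2) (1/(n+1)) ≤ x + r x / 2 := by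
      have := min_le_left (r x / 2) (1/(n+1:ℝ)); linarith
    have hmin2 : x + min (r x / 2) (1/(n+1)) ≤ x + 1/(n+1:ℝ) := by
      have := min_le_right (r x / 2) (1/(n+1:ℝ)); linarith
    refine ⟨(x, n), ⟨⟨hx, ?_⟩, ?_⟩, rfl⟩
    · have : c < r x / 2 := by linarith
      linarith
    · have hcn : c < 1/(n+1:ℝ) := by linarith
      have hn1 : (0:ℝ) < (n:ℝ)+1 := by positivity
      have : (n:ℝ) + 1 < 1/c := by
        rw [lt_div_iff₀ hc]
        rw [lt_div_iff₀ hn1] at hcn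
        linarith
      have h2 : (n:ℝ) < 1/c := by linarith
      have : (n:ℝ) < (⌈1/c⌉₊ : ℝ) + 1 := lt_of_lt_of_le h2 (by
        have := Nat.le_ceil (1/c); linarith)
      have : n < ⌈1/c⌉₊ + 1 := by exact_mod_cast this
      simpa [hN] using this
  -- left-separation of Q'
  have hQsep : ∀ y : ℝ, ∃ δ : ℝ, 0 < δ ∧ ∀ v ∈ Q', ¬ (y - δ < v ∧ v < y) := by
    intro y
    set c : ℝ := eps y / 2 with hcdef
    have hc : 0 < c := by have := heps y; simp [hcdef]; linarith
    have hsub : ∀ v ∈ Q', y - c < v → v < y →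
        v ∈ {v : ℝ | ∃ x ∈ K2, ∃ n : ℕ, v = (qf x n : ℝ) ∧ c ≤ (qf x n : ℝ) - x} := by
      rintro v ⟨x, hx, n, rfl⟩ hv1 hv2
      have hxv : x < (qf x n : ℝ) := hq1 x hx n
      have hxy : x < y := lt_trans hxv hv2
      have hxle : x ≤ y - eps y := by
        by_contra hcon
        exact hepsK y x (hK2sub hx) ⟨by linarith, hxy⟩
      exact ⟨x, hx, n, rfl, by simp [hcdef]; linarith⟩
    set F := {v : ℝ | ∃ x ∈ K2, ∃ n : ℕ, v = (qf x n : ℝ) ∧ c ≤ (qf x n : ℝ) - x} ∩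
      {v | y - c < v ∧ v < y} with hFdef
    have hFfin : F.Finite := ((hQcfin c hc).inter_of_left _)
    rcases F.eq_empty_or_nonempty with hFe | hFne
    · refine ⟨c, hc, fun v hv hcon => ?_⟩
      have : v ∈ F := ⟨hsub v hv hcon.1 hcon.2, hcon.1, hcon.2⟩
      rw [hFe] at this; exact this
    · set m := sSup F with hm
      have hmF : m ∈ F := Set.Nonempty.csSup_mem hFne hFfin
      have hmy : m < y := hmF.2.2
      refine ⟨y - m, by linarith, fun v hv hcon => ?_⟩
      have hvF : v ∈ F := by
        refine ⟨hsub v hv ?_ hcon.2, ?_, hcon.2⟩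
        · have := hmF.2.1; linarith [hcon.1]
        · have := hmF.2.1; linarith [hcon.1]
      have : v ≤ m := le_csSup hFfin.bddAbove hvF
      linarith [hcon.1]
  -- left separation of the union
  have hUsep : ∀ y : ℝ, ∃ δ : ℝ, 0 < δ ∧ ∀ v ∈ K' ∪ Q', ¬ (y - δ < v ∧ v < y) := by
    intro y
    obtain ⟨δq, hδq, hq⟩ := hQsep y
    refine ⟨min (eps y) δq, lt_min (heps y) hδq, ?_⟩
    rintro v (hv | hv) hcon
    · exact hepsK y v hv ⟨by have := min_le_left (eps y) δq; linarith [hcon.1], hcon.2⟩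
    · exact hq v hv ⟨by have := min_le_right (eps y) δq; linarith [hcon.1], hcon.2⟩
  -- closedness of the union
  have hclosed : IsClosed (K' ∪ Q') := by
    rw [← closure_subset_iff_isClosed]
    intro y hy
    by_contra hyn
    have hyK : y ∉ K' := fun h => hyn (Or.inl h)
    have hyQ : y ∉ Q' := fun h => hyn (Or.inr h)
    -- distance from y to K'
    obtain ⟨δ0, hδ0, hball⟩ : ∃ δ0 : ℝ, 0 < δ0 ∧ ∀ z ∈ K', ¬ (y - δ0 < z ∧ z < y + δ0) := by
      have : IsOpen K'ᶜ := hcl.isOpen_compl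
      obtain ⟨δ0, hδ0, hsub⟩ := Metric.isOpen_iff.1 this y hyK
      refine ⟨δ0, hδ0, fun z hz hcon => ?_⟩
      have : z ∈ Metric.ball y δ0 := by
        simp only [Metric.mem_ball, Real.dist_eq, abs_lt]
        constructor <;> linarith [hcon.1, hcon.2]
      exact (hsub this) hz
    obtain ⟨δ1, hδ1, hq1'⟩ := hQsep y
    -- right gap for Q'
    have hsubR : ∀ v ∈ Q', y < v → v < y + δ0/2 →
        v ∈ {v : ℝ | ∃ x ∈ K2, ∃ n : ℕ, v = (qf x n : ℝ) ∧ δ0/2 ≤ (qf x n : ℝ) - x} := by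
      rintro v ⟨x, hx, n, rfl⟩ hv1 hv2
      have hxv : x < (qf x n : ℝ) := hq1 x hx n
      have hxle : x ≤ y - δ0 := by
        by_contra hcon
        exact hball x (hK2sub hx) ⟨by linarith, by linarith⟩
      exact ⟨x, hx, n, rfl, by linarith⟩
    set F2 := {v : ℝ | ∃ x ∈ K2, ∃ n : ℕ, v = (qf x n : ℝ) ∧ δ0/2 ≤ (qf x n : ℝ) - x} ∩
      {v | y < v ∧ v < y + δ0/2} with hF2def
    have hF2fin : F2.Finite := (hQcfin (δ0/2) (by linarith)).inter_of_left _
    obtain ⟨δ2, hδ2, hq2'⟩ : ∃ δ2 : ℝ, 0 < δ2 ∧ ∀ v ∈ Q', ¬ (y < v ∧ v < y + δ2) := by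
      rcases F2.eq_empty_or_nonempty with hFe | hFne
      · refine ⟨δ0/2, by linarith, fun v hv hcon => ?_⟩
        have : v ∈ F2 := ⟨hsubR v hv hcon.1 hcon.2, hcon.1, hcon.2⟩
        rw [hFe] at this; exact this
      · set m := sInf F2 with hm
        have hmF : m ∈ F2 := Set.Nonempty.csInf_mem hFne hF2fin
        have hmy : y < m := hmF.2.1
        refine ⟨m - y, by linarith, fun v hv hcon => ?_⟩
        have hvF : v ∈ F2 := by
          refine ⟨hsubR v hv hcon.1 ?_, hcon.1, ?_⟩ <;> · have := hmF.2.2; linarith [hcon.2]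
        have : m ≤ v := csInf_le hF2fin.bddBelow hvF
        linarith [hcon.2]
    -- contradiction with y in the closure
    set δ := min δ0 (min δ1 δ2) with hδdef
    have hδ : 0 < δ := lt_min hδ0 (lt_min hδ1 hδ2)
    obtain ⟨z, hzU, hzb⟩ := Metric.mem_closure_iff.1 hy δ hδ
    rw [Real.dist_eq, abs_lt] at hzb
    have hd0 : δ ≤ δ0 := min_le_left _ _
    have hd1 : δ ≤ δ1 := le_trans (min_le_right _ _) (min_le_left _ _)
    have hd2 : δ ≤ δ2 := le_trans (min_le_right _ _) (min_le_right _ _)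
    rcases hzU with hzK | hzQ
    · exact hball z hzK ⟨by linarith [hzb.1], by linarith [hzb.2]⟩
    · rcases lt_trichotomy z y with hzy | hzy | hzy
      · exact hq1' z hzQ ⟨by linarith [hzb.1], hzy⟩
      · exact hyQ (hzy ▸ hzQ)
      · exact hq2' z hzQ ⟨hzy, by linarith [hzb.2]⟩
  -- boundedness and compactness
  have hsubIcc : K' ∪ Q' ⊆ Set.Icc A (B + 1) := by
    rintro v (hv | ⟨x, hx, n, rfl⟩)
    · exact ⟨hA hv, le_trans (hB hv) (by linarith)⟩
    · have hxv : x < (qf x n : ℝ) := hq1 x hx n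
      have h2 := hq2 x hx n
      have hmin : min (r x / 2) (1/(n+1:ℝ)) ≤ 1 := by
        refine le_trans (min_le_right _ _) ?_
        rw [div_le_one (by positivity)]
        have : (0:ℝ) ≤ n := Nat.cast_nonneg n
        linarith
      constructor
      · linarith [hA (hK2sub hx)]
      · linarith [hB (hK2sub hx)]
  have hcompU : IsCompact (K' ∪ Q') :=
    IsCompact.of_isClosed_subset isCompact_Icc hclosed hsubIcc
  -- density of Q' in K'
  have hdens : ∀ x ∈ K', ∀ ε : ℝ, 0 < ε → ∃ v ∈ Q', x ≤ v ∧ v < x + ε := by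
    intro x hx ε hε
    by_cases hS : (K' ∩ {z | x < z ∧ z < x + ε}).Nonempty
    · set S := K' ∩ {z | x < z ∧ z < x + ε} with hSdef
      have hbddS : BddAbove S := ⟨x + ε, fun s hs => (hs.2.2).le⟩
      set t := sSup S with ht
      have htK : t ∈ K' := by
        have h1 : t ∈ closure S := csSup_mem_closure hS hbddS
        have h2 : closure S ⊆ closure K' := closure_mono Set.inter_subset_left
        rw [hcl.closure_eq] at h2
        exact h2 h1
      have htub : ∀ s ∈ S, s ≤ t := fun s hs => le_csSup hbddS hs
      have htlt : t < x + ε := by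
        have : ∀ s ∈ S, s ≤ x + ε - eps (x + ε) := by
          intro s hs
          by_contra hcon
          exact hepsK (x + ε) s hs.1 ⟨by linarith, hs.2.2⟩
        have := csSup_le hS this
        have := heps (x + ε)
        linarith
      obtain ⟨z0, hz0⟩ := hS
      have htgt : x < t := lt_of_lt_of_le hz0.2.1 (htub z0 hz0)
      have htK2 : t ∈ K2 := by
        refine ⟨htK, x + ε - t, by linarith, fun z hz hcon => ?_⟩
        have : z ∈ S := ⟨hz, lt_trans htgt hcon.1, by linarith [hcon.2]⟩
        linarith [htub z this, hcon.1]
      obtain ⟨n, hn⟩ := exists_nat_one_div_lt (show (0:ℝ) < x + ε - t by linarith)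
      refine ⟨(qf t n : ℝ), ⟨t, htK2, n, rfl⟩, ?_, ?_⟩
      · exact le_of_lt (lt_of_lt_of_le htgt (le_of_lt (hq1 t htK2 n)))
      · have h2 := hq2 t htK2 n
        have : min (r t / 2) (1/(n+1:ℝ)) ≤ 1/(n+1:ℝ) := min_le_right _ _
        have hn' : (1:ℝ)/(n+1) < x + ε - t := hn
        push_cast at hn' ⊢
        linarith
    · have hxK2 : x ∈ K2 := by
        refine ⟨hx, ε, hε, fun z hz hcon => hS ⟨z, hz, hcon.1, hcon.2⟩⟩
      obtain ⟨n, hn⟩ := exists_nat_one_div_lt hε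
      refine ⟨(qf x n : ℝ), ⟨x, hxK2, n, rfl⟩, le_of_lt (hq1 x hxK2 n), ?_⟩
      have h2 := hq2 x hxK2 n
      have : min (r x / 2) (1/(n+1:ℝ)) ≤ 1/(n+1:ℝ) := min_le_right _ _
      have hn' : (1:ℝ)/(n+1) < ε := hn
      push_cast at hn' ⊢
      linarith
  exact ⟨Q', by rintro v ⟨x, hx, n, rfl⟩; exact ⟨qf x n, rfl⟩, hcompU, hUsep, hdens⟩

/-- Every compact subset $K$ of the Sorgenfrey line can be enlarged by a countable set $Q$ of
rationals so that $K \cup Q$ is compact and $Q$ is dense in $K \cup Q$. -/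
theorem compact_subset_rational_separable_compact :
    ∀ K : Set ℝₗ, IsCompact K →
      ∃ Q : Set ℝₗ, Q.Countable ∧ Q ⊆ Set.range (fun q : ℚ => (q : ℝₗ)) ∧
        IsCompact (K ∪ Q) ∧ K ∪ Q ⊆ closure Q := by
  intro K hK
  set K' : Set ℝ := toR '' K with hK'def
  have hK' : IsCompact K' := hK.image SL.continuous_toR
  have hsep : ∀ y : ℝ, ∃ ε : ℝ, 0 < ε ∧ ∀ z ∈ K', ¬ (y - ε < z ∧ z < y) := by
    intro y
    obtain ⟨ε, hε, h⟩ := SL.leftSep hK y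
    exact ⟨ε, hε, by rintro z ⟨w, hw, rfl⟩ hcon; exact h w hw hcon⟩
  obtain ⟨Q', hQrat, hcompU, hUsep, hdens⟩ := SLmain K' hK' hsep
  set Q : Set ℝₗ := toR ⁻¹' Q' with hQdef
  have htoRinj : Function.Injective toR := fun _ _ h => h
  have htoRsurj : Function.Surjective toR := fun x => ⟨x, rfl⟩
  have himg : toR '' (K ∪ Q) = K' ∪ Q' := by
    rw [Set.image_union, hQdef, Set.image_preimage_eq _ htoRsurj]
  refine ⟨Q, ?_, ?_, ?_, ?_⟩
  · exact Set.Countable.preimage ((Set.countable_range _).mono hQrat) htoRinj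
  · intro v hv
    obtain ⟨q, hq⟩ := hQrat hv
    exact ⟨q, htoRinj (by exact hq)⟩
  · rw [isCompact_iff_ultrafilter_le_nhds]
    intro f hf
    set g : Ultrafilter ℝ := f.map toR with hgdef
    have hg : ↑g ≤ Filter.principal (K' ∪ Q') := by
      rw [hgdef, Ultrafilter.coe_map]
      calc Filter.map toR ↑f ≤ Filter.map toR (Filter.principal (K ∪ Q)) := Filter.map_mono hf
      _ = Filter.principal (toR '' (K ∪ Q)) := Filter.map_principal
      _ = Filter.principal (K' ∪ Q') := by rw [himg]
    obtain ⟨y, hyC, hgy⟩ := hcompU.ultrafilter_le_nhds g hg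
    refine ⟨ofR y, ?_, ?_⟩
    · rcases hyC with hy | hy
      · obtain ⟨w, hw, hwy⟩ := hy
        exact Or.inl (by rwa [show ofR y = w from (htoRinj hwy).symm])
      · exact Or.inr (by exact hy)
    · rw [(SL.nhds_basis_Ico (ofR y)).ge_iff]
      intro b hb
      obtain ⟨δ, hδ, hUs⟩ := hUsep y
      have hyb : y < toR b := hb
      have hIoo : Set.Ioo (y - δ) (toR b) ∈ nhds y := Ioo_mem_nhds (by linarith) hyb
      have h1 : Set.Ioo (y - δ) (toR b) ∈ g := hgy hIoo
      have h2 : K' ∪ Q' ∈ g := hg (Filter.mem_principal_self _)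
      have h3 : Set.Ioo (y - δ) (toR b) ∩ (K' ∪ Q') ⊆ Set.Ico y (toR b) := by
        rintro z ⟨hz1, hz2⟩
        rcases lt_or_ge z y with hzy | hzy
        · exact absurd ⟨hz1.1, hzy⟩ (hUs z hz2)
        · exact ⟨hzy, hz1.2⟩
      have h4 : Set.Ico y (toR b) ∈ g := Filter.mem_of_superset (Filter.inter_mem h1 h2) h3
      have h5 : toR ⁻¹' Set.Ico y (toR b) ∈ f := by
        rw [hgdef] at h4
        exact (Ultrafilter.mem_map).1 h4
      have h6 : toR ⁻¹' Set.Ico y (toR b) = Set.Ico (ofR y) b := rfl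
      rwa [h6] at h5
  · rintro v (hv | hv)
    · rw [SL.mem_closure]
      intro ε hε
      obtain ⟨v', hv'Q', h1, h2⟩ := hdens (toR v) ⟨v, hv, rfl⟩ ε hε
      exact ⟨ofR v', by exact hv'Q', by exact h1, by exact h2⟩
    · exact subset_closure hv
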